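/- Let e₁,…,e₇ be a basis of ℂ⁷ and work in ⋀²ℂ⁷. Consider the set S consisting of the three bivectors e₂∧e₅, e₂∧e₇, e₁∧e₂ − e₅∧e₇, together with all bivectors x·(e₂∧e₆ − e₁∧e₅) − y·(e₂∧e₄ + e₁∧e₇) for (x,y) ∈ ℂ², and all bivectors y²·e₄∧e₇ − x²·e₆∧e₅ + x·y·(e₄∧e₅ − e₆∧e₇) for (x,y) ∈ ℂ². Then the ℂ-linear span of S in ⋀²ℂ⁷ has dimension exactly 8. -/

import Mathlib

open ExteriorAlgebra

noncomputable def altMap2 (b : Module.Basis (Fin 7) ℂ (Fin 7 → ℂ)) (i j : Fin 7) :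
    (Fin 7 → ℂ) [⋀^Fin 2]→ₗ[ℂ] ℂ where
  toMultilinearMap :=
    (MultilinearMap.mkPiAlgebra ℂ (Fin 2) ℂ).compLinearMap ![b.coord i, b.coord j]
    - (MultilinearMap.mkPiAlgebra ℂ (Fin 2) ℂ).compLinearMap ![b.coord j, b.coord i]
  map_eq_zero_of_eq' := by
    intro v k l hv hkl
    fin_cases k <;> fin_cases l <;> simp_all [MultilinearMap.compLinearMap_apply,
      MultilinearMap.mkPiAlgebra_apply, Fin.prod_univ_two] <;> ring

noncomputable def phi (b : Module.Basis (Fin 7) ℂ (Fin 7 → ℂ)) (i j : Fin 7) :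
    ExteriorAlgebra ℂ (Fin 7 → ℂ) →ₗ[ℂ] ℂ :=
  ExteriorAlgebra.liftAlternating (fun n => match n with
    | 2 => altMap2 b i j
    | _ => 0)

lemma phi_apply_basis (b : Module.Basis (Fin 7) ℂ (Fin 7 → ℂ)) (i j k l : Fin 7) :
    phi b i j (ι ℂ (b k) * ι ℂ (b l)) =
      (if k = i then (1:ℂ) else 0) * (if l = j then 1 else 0)
        - (if k = j then (1:ℂ) else 0) * (if l = i then 1 else 0) := by
  have h : ι ℂ (b k) * ι ℂ (b l) = ιMulti ℂ 2 ![b k, b l] := by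
    simp [ιMulti_apply, List.ofFn_succ]
  rw [h, phi, liftAlternating_apply_ιMulti]
  simp [altMap2, MultilinearMap.compLinearMap_apply, MultilinearMap.mkPiAlgebra_apply,
    Fin.prod_univ_two, Module.Basis.coord_apply, Module.Basis.repr_self, Finsupp.single_apply]

set_option maxHeartbeats 1000000 in
/-- For a basis `e₁,…,e₇` of `ℂ⁷`, the set `S ⊂ ⋀²ℂ⁷` consisting of
`e₂∧e₅`, `e₂∧e₇`, `e₁∧e₂ − e₅∧e₇`, all `x·(e₂∧e₆ − e₁∧e₅) − y·(e₂∧e₄ + e₁∧e₇)` and all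
`y²·e₄∧e₇ − x²·e₆∧e₅ + xy·(e₄∧e₅ − e₆∧e₇)` for `(x,y) ∈ ℂ²`, spans a subspace of
dimension exactly `8`. (Indices are shifted: `eᵢ` of the statement is `e (i-1)`.) -/
theorem stmt_16 (b : Module.Basis (Fin 7) ℂ (Fin 7 → ℂ)) :
    let e : Fin 7 → ExteriorAlgebra ℂ (Fin 7 → ℂ) := fun i => ι ℂ (b i)
    let S : Set (ExteriorAlgebra ℂ (Fin 7 → ℂ)) :=
      {e 1 * e 4, e 1 * e 6, e 0 * e 1 - e 4 * e 6} ∪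
      (Set.range fun p : ℂ × ℂ =>
        p.1 • (e 1 * e 5 - e 0 * e 4) - p.2 • (e 1 * e 3 + e 0 * e 6)) ∪
      (Set.range fun p : ℂ × ℂ =>
        p.2 ^ 2 • (e 3 * e 6) - p.1 ^ 2 • (e 5 * e 4) +
          (p.1 * p.2) • (e 3 * e 4 - e 5 * e 6))
    Module.finrank ℂ (Submodule.span ℂ S) = 8 := by
  intro e S
  classical
  have he : e = fun i => ι ℂ (b i) := rfl
  have hS : S =
      {e 1 * e 4, e 1 * e 6, e 0 * e 1 - e 4 * e 6} ∪
      (Set.range fun p : ℂ × ℂ =>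
        p.1 • (e 1 * e 5 - e 0 * e 4) - p.2 • (e 1 * e 3 + e 0 * e 6)) ∪
      (Set.range fun p : ℂ × ℂ =>
        p.2 ^ 2 • (e 3 * e 6) - p.1 ^ 2 • (e 5 * e 4) +
          (p.1 * p.2) • (e 3 * e 4 - e 5 * e 6)) := rfl
  rw [hS]
  clear hS
  set w : Fin 8 → ExteriorAlgebra ℂ (Fin 7 → ℂ) :=
    ![e 1 * e 4, e 1 * e 6, e 0 * e 1 - e 4 * e 6, e 1 * e 5 - e 0 * e 4,
      e 1 * e 3 + e 0 * e 6, e 3 * e 6, e 5 * e 4, e 3 * e 4 - e 5 * e 6] with hw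
  have hwmem : ∀ k, w k ∈ Submodule.span ℂ (Set.range w) :=
    fun k => Submodule.subset_span ⟨k, rfl⟩
  have hspan : Submodule.span ℂ
      ({e 1 * e 4, e 1 * e 6, e 0 * e 1 - e 4 * e 6} ∪
      (Set.range fun p : ℂ × ℂ =>
        p.1 • (e 1 * e 5 - e 0 * e 4) - p.2 • (e 1 * e 3 + e 0 * e 6)) ∪
      (Set.range fun p : ℂ × ℂ =>
        p.2 ^ 2 • (e 3 * e 6) - p.1 ^ 2 • (e 5 * e 4) +
          (p.1 * p.2) • (e 3 * e 4 - e 5 * e 6)) : Set (ExteriorAlgebra ℂ (Fin 7 → ℂ)))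
      = Submodule.span ℂ (Set.range w) := by
    apply le_antisymm <;> rw [Submodule.span_le]
    · rintro z (((rfl | rfl | rfl) | ⟨p, rfl⟩) | ⟨p, rfl⟩)
      · exact hwmem 0
      · exact hwmem 1
      · exact hwmem 2
      · exact Submodule.sub_mem _ (Submodule.smul_mem _ _ (hwmem 3))
          (Submodule.smul_mem _ _ (hwmem 4))
      · exact Submodule.add_mem _ (Submodule.sub_mem _
            (Submodule.smul_mem _ _ (hwmem 5)) (Submodule.smul_mem _ _ (hwmem 6)))
          (Submodule.smul_mem _ _ (hwmem 7))
    · rintro z ⟨k, rfl⟩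
      have m0 : e 1 * e 4 ∈ ({e 1 * e 4, e 1 * e 6, e 0 * e 1 - e 4 * e 6} ∪
          (Set.range fun p : ℂ × ℂ =>
            p.1 • (e 1 * e 5 - e 0 * e 4) - p.2 • (e 1 * e 3 + e 0 * e 6)) ∪
          (Set.range fun p : ℂ × ℂ =>
            p.2 ^ 2 • (e 3 * e 6) - p.1 ^ 2 • (e 5 * e 4) +
              (p.1 * p.2) • (e 3 * e 4 - e 5 * e 6)) : Set (ExteriorAlgebra ℂ (Fin 7 → ℂ))) := Or.inl (Or.inl (by simp))
      have m1 : e 1 * e 6 ∈ ({e 1 * e 4, e 1 * e 6, e 0 * e 1 - e 4 * e 6} ∪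
          (Set.range fun p : ℂ × ℂ =>
            p.1 • (e 1 * e 5 - e 0 * e 4) - p.2 • (e 1 * e 3 + e 0 * e 6)) ∪
          (Set.range fun p : ℂ × ℂ =>
            p.2 ^ 2 • (e 3 * e 6) - p.1 ^ 2 • (e 5 * e 4) +
              (p.1 * p.2) • (e 3 * e 4 - e 5 * e 6)) : Set (ExteriorAlgebra ℂ (Fin 7 → ℂ))) := Or.inl (Or.inl (by simp))
      have m2 : e 0 * e 1 - e 4 * e 6 ∈ ({e 1 * e 4, e 1 * e 6, e 0 * e 1 - e 4 * e 6} ∪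
          (Set.range fun p : ℂ × ℂ =>
            p.1 • (e 1 * e 5 - e 0 * e 4) - p.2 • (e 1 * e 3 + e 0 * e 6)) ∪
          (Set.range fun p : ℂ × ℂ =>
            p.2 ^ 2 • (e 3 * e 6) - p.1 ^ 2 • (e 5 * e 4) +
              (p.1 * p.2) • (e 3 * e 4 - e 5 * e 6)) : Set (ExteriorAlgebra ℂ (Fin 7 → ℂ))) := Or.inl (Or.inl (by simp))
      have m3 : ∀ p : ℂ × ℂ,
          p.1 • (e 1 * e 5 - e 0 * e 4) - p.2 • (e 1 * e 3 + e 0 * e 6) ∈ ({e 1 * e 4, e 1 * e 6, e 0 * e 1 - e 4 * e 6} ∪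
          (Set.range fun p : ℂ × ℂ =>
            p.1 • (e 1 * e 5 - e 0 * e 4) - p.2 • (e 1 * e 3 + e 0 * e 6)) ∪
          (Set.range fun p : ℂ × ℂ =>
            p.2 ^ 2 • (e 3 * e 6) - p.1 ^ 2 • (e 5 * e 4) +
              (p.1 * p.2) • (e 3 * e 4 - e 5 * e 6)) : Set (ExteriorAlgebra ℂ (Fin 7 → ℂ))) :=
        fun p => Or.inl (Or.inr ⟨p, rfl⟩)
      have m4 : ∀ p : ℂ × ℂ,
          p.2 ^ 2 • (e 3 * e 6) - p.1 ^ 2 • (e 5 * e 4) +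
            (p.1 * p.2) • (e 3 * e 4 - e 5 * e 6) ∈ ({e 1 * e 4, e 1 * e 6, e 0 * e 1 - e 4 * e 6} ∪
          (Set.range fun p : ℂ × ℂ =>
            p.1 • (e 1 * e 5 - e 0 * e 4) - p.2 • (e 1 * e 3 + e 0 * e 6)) ∪
          (Set.range fun p : ℂ × ℂ =>
            p.2 ^ 2 • (e 3 * e 6) - p.1 ^ 2 • (e 5 * e 4) +
              (p.1 * p.2) • (e 3 * e 4 - e 5 * e 6)) : Set (ExteriorAlgebra ℂ (Fin 7 → ℂ))) :=
        fun p => Or.inr ⟨p, rfl⟩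
      fin_cases k
      · exact Submodule.subset_span m0
      · exact Submodule.subset_span m1
      · exact Submodule.subset_span m2
      · have := Submodule.subset_span (R := ℂ) (m3 (1, 0))
        simpa [hw] using this
      · have := Submodule.neg_mem _ (Submodule.subset_span (R := ℂ) (m3 (0, 1)))
        simpa [hw] using this
      · have := Submodule.subset_span (R := ℂ) (m4 (0, 1))
        simpa [hw] using this
      · have := Submodule.neg_mem _ (Submodule.subset_span (R := ℂ) (m4 (1, 0)))
        simpa [hw] using this
      · have h11 := Submodule.subset_span (R := ℂ) (m4 (1, 1))
        have h01 := Submodule.subset_span (R := ℂ) (m4 (0, 1))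
        have h10 := Submodule.subset_span (R := ℂ) (m4 (1, 0))
        have := Submodule.sub_mem _ (Submodule.sub_mem _ h11 h01) h10
        show e 3 * e 4 - e 5 * e 6 ∈ _
        convert this using 1
        simp
        abel
  -- linear independence via dual functionals
  have hw0 : w 0 = e 1 * e 4 := rfl
  have hw1 : w 1 = e 1 * e 6 := rfl
  have hw2 : w 2 = e 0 * e 1 - e 4 * e 6 := rfl
  have hw3 : w 3 = e 1 * e 5 - e 0 * e 4 := rfl
  have hw4 : w 4 = e 1 * e 3 + e 0 * e 6 := rfl
  have hw5 : w 5 = e 3 * e 6 := rfl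
  have hw6 : w 6 = e 5 * e 4 := rfl
  have hw7 : w 7 = e 3 * e 4 - e 5 * e 6 := rfl
  have hli : LinearIndependent ℂ w := by
    apply Fintype.linearIndependent_iff.mpr
    intro g hg
    have hsum : ∀ i j : Fin 7, ∑ k, g k * phi b i j (w k) = 0 := by
      intro i j
      have h := congrArg (phi b i j) hg
      simpa [map_sum, map_smul, smul_eq_mul] using h
    have key : ∀ i j : Fin 7,
        g 0 * phi b i j (w 0) + g 1 * phi b i j (w 1) + g 2 * phi b i j (w 2) +
        g 3 * phi b i j (w 3) + g 4 * phi b i j (w 4) + g 5 * phi b i j (w 5) +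
        g 6 * phi b i j (w 6) + g 7 * phi b i j (w 7) = 0 := by
      intro i j
      have h := hsum i j
      rwa [Fin.sum_univ_eight] at h
    intro k
    fin_cases k
    · have h := key 1 4
      simp only [hw0, hw1, hw2, hw3, hw4, hw5, hw6, hw7, he, map_sub, map_add] at h
      simp only [phi_apply_basis] at h
      norm_num at h
      simpa using h
    · have h := key 1 6
      simp only [hw0, hw1, hw2, hw3, hw4, hw5, hw6, hw7, he, map_sub, map_add] at h
      simp only [phi_apply_basis] at h
      norm_num at h
      simpa using h
    · have h := key 0 1
      simp only [hw0, hw1, hw2, hw3, hw4, hw5, hw6, hw7, he, map_sub, map_add] at h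
      simp only [phi_apply_basis] at h
      norm_num at h
      simpa using h
    · have h := key 1 5
      simp only [hw0, hw1, hw2, hw3, hw4, hw5, hw6, hw7, he, map_sub, map_add] at h
      simp only [phi_apply_basis] at h
      norm_num at h
      simpa using h
    · have h := key 1 3
      simp only [hw0, hw1, hw2, hw3, hw4, hw5, hw6, hw7, he, map_sub, map_add] at h
      simp only [phi_apply_basis] at h
      norm_num at h
      simpa using h
    · have h := key 3 6
      simp only [hw0, hw1, hw2, hw3, hw4, hw5, hw6, hw7, he, map_sub, map_add] at h
      simp only [phi_apply_basis] at h
      norm_num at h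
      simpa using h
    · have h := key 5 4
      simp only [hw0, hw1, hw2, hw3, hw4, hw5, hw6, hw7, he, map_sub, map_add] at h
      simp only [phi_apply_basis] at h
      norm_num at h
      simpa using h
    · have h := key 3 4
      simp only [hw0, hw1, hw2, hw3, hw4, hw5, hw6, hw7, he, map_sub, map_add] at h
      simp only [phi_apply_basis] at h
      norm_num at h
      simpa using h
  rw [hspan, finrank_span_eq_card hli]
  simp
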